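/- arXiv:1903.04662 — 2 statements merged into one kernel-verified Lean document; each statement's English description precedes it below -/
import Mathlib

section
/- Let v₀ be an n×n real matrix with antisymmetric part K = (v₀ − v₀ᵀ)/2 and symmetric part P = (v₀ + v₀ᵀ)/2. Then the curve v(t) := K + exp(−2tK) · P · exp(2tK) satisfies v(0) = v₀ and is differentiable with v′(t) = −2[K, exp(−2tK) · P · exp(2tK)] for all t ∈ ℝ; that is, v solves the Euler–Arnold equation v̇ = −2[v_𝔨, v_𝔭], where v_𝔨(t) = K and v_𝔭(t) = exp(−2tK) · P · exp(2tK) are the antisymmetric and symmetric parts of v(t). -/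
open Matrix NormedSpace

attribute [local instance] Matrix.linftyOpNormedAddCommGroup
  Matrix.linftyOpNormedSpace Matrix.linftyOpNormedRing Matrix.linftyOpNormedAlgebra

/-- Let `v₀` be an `n × n` real matrix with antisymmetric part `K` and
symmetric part `P`. Then `v(t) = K + exp(-2tK) · P · exp(2tK)` satisfies
`v(0) = v₀` and `v'(t) = -2 [K, exp(-2tK) · P · exp(2tK)]`, i.e. `v` solves
the Euler–Arnold equation `v̇ = -2 [v𝔨, v𝔭]`. -/
theorem euler_arnold_solution {n : ℕ}
    (v₀ K P : Matrix (Fin n) (Fin n) ℝ)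
    (hK : K = (2 : ℝ)⁻¹ • (v₀ - v₀ᵀ)) (hP : P = (2 : ℝ)⁻¹ • (v₀ + v₀ᵀ)) :
    (fun t : ℝ => K + exp ((-2 * t) • K) * P * exp ((2 * t) • K)) 0 = v₀ ∧
    ∀ t : ℝ, HasDerivAt
      (fun t : ℝ => K + exp ((-2 * t) • K) * P * exp ((2 * t) • K))
      ((-2 : ℝ) • (K * (exp ((-2 * t) • K) * P * exp ((2 * t) • K))
        - (exp ((-2 * t) • K) * P * exp ((2 * t) • K)) * K)) t := by
  constructor
  · simp only [mul_zero, zero_smul, exp_zero, one_mul, mul_one, hK, hP]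
    module
  · intro t
    have key : ∀ c : ℝ, HasDerivAt (fun s : ℝ => exp ((c * s) • K))
        (exp ((c * t) • K) * (c • K)) t := by
      intro c
      have h := hasDerivAt_exp_smul_const (𝕂 := ℝ) (c • K) t
      simp only [smul_smul, mul_comm] at h ⊢
      exact h
    have hf := key (-2)
    have hg := key 2
    have h := ((hf.mul_const P).mul hg).const_add K
    refine h.congr_deriv (Eq.symm ?_)
    have hc : Commute K (exp ((-2 * t) • K)) :=
      ((Commute.refl K).smul_right _).exp_right
    simp only [← mul_assoc]
    rw [hc.eq]
    simp only [smul_sub, smul_mul_assoc, mul_smul_comm, mul_assoc]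
    match_scalars <;> ring
end

section
/- Let v₀ be an n×n real matrix with antisymmetric part K = (v₀ − v₀ᵀ)/2 and symmetric part P = (v₀ + v₀ᵀ)/2, and let q₀ be any n×n real matrix. Define v(t) := K + exp(−2tK) · P · exp(2tK) and q(t) := q₀ · exp(t(P − K)) · exp(2tK). Then q is differentiable with q(0) = q₀ and q′(t) = q(t) · v(t) for all t ∈ ℝ; that is, (q(t), v(t)) solves the reconstruction equation for the geodesic flow of the left-invariant metric induced by ⟨A,B⟩ = tr(AᵀB). -/
open Matrix NormedSpace

attribute [local instance] Matrix.linftyOpNormedAddCommGroup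
  Matrix.linftyOpNormedSpace Matrix.linftyOpNormedRing Matrix.linftyOpNormedAlgebra

/-- Let `v₀` be an `n × n` real matrix with antisymmetric part `K` and
symmetric part `P`, and `q₀` any matrix. With
`v(t) = K + exp(-2tK) · P · exp(2tK)` and `q(t) = q₀ · exp(t(P-K)) · exp(2tK)`,
the curve `q` satisfies `q(0) = q₀` and the reconstruction equation
`q'(t) = q(t) · v(t)`. -/
theorem reconstruction_equation_solution {n : ℕ}
    (v₀ K P q₀ : Matrix (Fin n) (Fin n) ℝ)
    (hK : K = (2 : ℝ)⁻¹ • (v₀ - v₀ᵀ)) (hP : P = (2 : ℝ)⁻¹ • (v₀ + v₀ᵀ)) :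
    (fun t : ℝ => q₀ * exp (t • (P - K)) * exp ((2 * t) • K)) 0 = q₀ ∧
    ∀ t : ℝ, HasDerivAt
      (fun t : ℝ => q₀ * exp (t • (P - K)) * exp ((2 * t) • K))
      ((q₀ * exp (t • (P - K)) * exp ((2 * t) • K)) *
        (K + exp ((-2 * t) • K) * P * exp ((2 * t) • K))) t := by
  constructor
  · simp [exp_zero]
  · intro t
    have h1 : HasDerivAt (fun t : ℝ => exp (t • (P - K)))
        (exp (t • (P - K)) * (P - K)) t := hasDerivAt_exp_smul_const (P - K) t
    have h2 : HasDerivAt (fun t : ℝ => exp ((2 * t) • K))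
        (exp ((2 * t) • K) * ((2 : ℝ) • K)) t := by
      have := hasDerivAt_exp_smul_const ((2 : ℝ) • K) t
      simp only [smul_smul, mul_comm] at this ⊢
      exact this
    have h3 : HasDerivAt (fun t : ℝ => q₀ * exp (t • (P - K)) * exp ((2 * t) • K)) _ t :=
      (h1.const_mul q₀).mul h2
    convert h3 using 1
    set E₁ := exp (t • (P - K)) with hE₁
    set E₂ := exp ((2 * t) • K) with hE₂
    set F := exp ((-2 * t) • K) with hF
    have hcom : Commute K E₂ := ((Commute.refl K).smul_right (2 * t)).exp_right
    have hFE : E₂ * F = 1 := by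
      rw [hE₂, hF, ← Matrix.exp_add_of_commute _ _
        (((Commute.refl K).smul_left (2 * t)).smul_right (-2 * t))]
      norm_num [exp_zero]
    have key : E₂ * (F * P * E₂) = P * E₂ := by
      rw [show E₂ * (F * P * E₂) = (E₂ * F) * (P * E₂) by noncomm_ring, hFE, one_mul]
    rw [mul_add, mul_assoc (q₀ * E₁) E₂ (F * P * E₂), key]
    simp only [two_smul, mul_add, add_mul, mul_sub, sub_mul, ← mul_assoc]
    rw [mul_assoc (q₀ * E₁) K E₂, hcom.eq, ← mul_assoc]
    abel
end
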